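/- Let A be an n×n complex matrix all of whose rows are equal. Then A is universal (the Jacobian of x ↦ x + φ(Ax) is a nonzero constant for every analytic φ) if and only if the trace of A is zero, equivalently the entries of each row sum to zero. -/

import Mathlib

open Matrix BigOperators

/-- Jacobian determinant of a map `f : ℂ^ι → ℂ^ι` at `x`. -/
noncomputable def jacDet {ι : Type*} [Fintype ι] [DecidableEq ι]
    (f : (ι → ℂ) → (ι → ℂ)) (x : ι → ℂ) : ℂ :=
  (LinearMap.toMatrix (Pi.basisFun ℂ ι) (Pi.basisFun ℂ ι)
    (fderiv ℂ f x).toLinearMap).det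

/-- The map `x ↦ x + φ(Ax)`, with `φ` applied entrywise. -/
noncomputable def phiMap {ι : Type*} [Fintype ι] (A : Matrix ι ι ℂ) (φ : ℂ → ℂ)
    (x : ι → ℂ) : ι → ℂ :=
  fun j => x j + φ (A.mulVec x j)

/-- Domain of definition of `x ↦ x + φ(Ax)` for `φ` defined on `Ω`. -/
def phiDom {ι : Type*} [Fintype ι] (A : Matrix ι ι ℂ) (Ω : Set ℂ) : Set (ι → ℂ) :=
  {x | ∀ j, A.mulVec x j ∈ Ω}

/-- `(A, φ)` is a good pair: the Jacobian of `x + φ(Ax)` is identically a nonzero constant. -/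
def IsGoodPair {ι : Type*} [Fintype ι] [DecidableEq ι]
    (A : Matrix ι ι ℂ) (Ω : Set ℂ) (φ : ℂ → ℂ) : Prop :=
  ∃ c : ℂ, c ≠ 0 ∧ ∀ x ∈ phiDom A Ω, jacDet (phiMap A φ) x = c

/-- A matrix is universal if it forms a good pair with every analytic function. -/
def IsUniversal {ι : Type*} [Fintype ι] [DecidableEq ι] (A : Matrix ι ι ℂ) : Prop :=
  ∀ (Ω : Set ℂ) (φ : ℂ → ℂ), IsOpen Ω → Ω.Nonempty → IsPreconnected Ω →
    AnalyticOn ℂ φ Ω → (phiDom A Ω).Nonempty → IsGoodPair A Ω φ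

/-- The principal minor of `A` indexed by `I`. -/
noncomputable def principalMinor {ι : Type*} [DecidableEq ι] (A : Matrix ι ι ℂ)
    (I : Finset ι) : ℂ :=
  (A.submatrix (fun i : I => (i : ι)) (fun i : I => (i : ι))).det

lemma jac_eq {n : ℕ} (hn : 0 < n) (A : Matrix (Fin n) (Fin n) ℂ)
    (hrows : ∀ j k, A j = A k) (φ : ℂ → ℂ) (x : Fin n → ℂ)
    (hφ : DifferentiableAt ℂ φ (A.mulVec x ⟨0, hn⟩)) :
    jacDet (phiMap A φ) x = 1 + A.trace * deriv φ (A.mulVec x ⟨0, hn⟩) := by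
  set i0 : Fin n := ⟨0, hn⟩
  set w : ℂ := A.mulVec x i0 with hw
  have hmv : ∀ (y : Fin n → ℂ) (j : Fin n), A.mulVec y j = A.mulVec y i0 := by
    intro y j
    simp only [Matrix.mulVec, hrows j i0]
  set g : (Fin n → ℂ) →L[ℂ] (Fin n → ℂ) := LinearMap.toContinuousLinearMap A.mulVecLin
  have hg : HasFDerivAt (fun y => A.mulVec y) g x := by
    have := g.hasFDerivAt (x := x)
    convert this using 2
    rfl
  set d : ℂ := deriv φ w with hd
  set L : (Fin n → ℂ) →L[ℂ] (Fin n → ℂ) :=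
    ContinuousLinearMap.pi (fun j => ContinuousLinearMap.proj j +
      d • ((ContinuousLinearMap.proj j).comp g)) with hL
  have hF : HasFDerivAt (phiMap A φ) L x := by
    apply hasFDerivAt_pi''
    intro j
    have h1 : HasFDerivAt (fun y : Fin n → ℂ => y j)
        (ContinuousLinearMap.proj (R := ℂ) (φ := fun _ : Fin n => ℂ) j) x :=
      hasFDerivAt_apply j x
    have hinner : HasFDerivAt (fun y => A.mulVec y j)
        ((ContinuousLinearMap.proj j).comp g) x := by
      exact (hasFDerivAt_apply j _).comp x hg
    have hφ' : HasDerivAt φ d (A.mulVec x j) := by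
      rw [hmv x j]
      exact hφ.hasDerivAt
    have h2 : HasFDerivAt (fun y => φ (A.mulVec y j))
        (d • ((ContinuousLinearMap.proj j).comp g)) x :=
      hφ'.comp_hasFDerivAt x hinner
    have h3 := h1.add h2
    simp only [hL, ContinuousLinearMap.proj_pi]
    exact h3
  have hfd : fderiv ℂ (phiMap A φ) x = L := hF.fderiv
  have hM : (LinearMap.toMatrix (Pi.basisFun ℂ (Fin n)) (Pi.basisFun ℂ (Fin n))
      (fderiv ℂ (phiMap A φ) x).toLinearMap) =
      1 + Matrix.replicateCol Unit (fun _ => d) * Matrix.replicateRow Unit (A i0) := by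
    rw [hfd]
    ext i j
    rw [LinearMap.toMatrix_apply]
    simp only [Pi.basisFun_apply, Pi.basisFun_repr, ContinuousLinearMap.coe_coe]
    have : L (Pi.single j (1:ℂ)) i = (Pi.single j 1 : Fin n → ℂ) i + d * (A.mulVec (Pi.single j (1:ℂ)) i) := by
      simp [L, g, ContinuousLinearMap.proj]
    rw [this]
    have hmvs : A.mulVec (Pi.single j (1:ℂ)) i = A i j := by
      simp [Matrix.mulVec, dotProduct, Pi.single_apply]
    rw [hmvs, hrows i i0]
    simp [Matrix.one_apply, Matrix.replicateCol, Matrix.replicateRow, Matrix.mul_apply, Pi.single_apply]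
  rw [jacDet, hM, Matrix.det_one_add_replicateCol_mul_replicateRow]
  have htr : A.trace = ∑ k, A i0 k := by
    rw [Matrix.trace]
    exact Finset.sum_congr rfl fun k _ => by rw [Matrix.diag_apply, hrows k i0]
  rw [htr]
  simp [dotProduct, Finset.sum_mul]

theorem stmt8 (n : ℕ) (hn : 0 < n) (A : Matrix (Fin n) (Fin n) ℂ)
    (hrows : ∀ j k : Fin n, A j = A k) :
    (IsUniversal A ↔ Matrix.trace A = 0) ∧
    (Matrix.trace A = 0 ↔ ∑ k, A ⟨0, hn⟩ k = 0) := by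
  have htr : A.trace = ∑ k, A ⟨0, hn⟩ k := by
    rw [Matrix.trace]
    exact Finset.sum_congr rfl fun k _ => by rw [Matrix.diag_apply, hrows k ⟨0, hn⟩]
  refine ⟨⟨fun hU => ?_, fun h0 => ?_⟩, by rw [htr]⟩
  · -- universal → trace = 0
    obtain ⟨c, hc, hcon⟩ := hU Set.univ (fun z => z ^ 2) isOpen_univ ⟨0, trivial⟩
      isPreconnected_univ
      (fun z _ => (analyticAt_id.pow 2).analyticWithinAt)
      ⟨0, fun j => trivial⟩
    have hder : ∀ w : ℂ, deriv (fun z : ℂ => z ^ 2) w = 2 * w := by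
      intro w; simp [deriv_pow]
    have h1 : jacDet (phiMap A (fun z => z ^ 2)) 0 = 1 := by
      rw [jac_eq hn A hrows _ _ (differentiableAt_pow 2)]
      simp [Matrix.mulVec, hder]
    have h2 : jacDet (phiMap A (fun z => z ^ 2)) (fun _ => 1) =
        1 + A.trace * (2 * A.trace) := by
      rw [jac_eq hn A hrows _ _ (differentiableAt_pow 2), hder]
      have : A.mulVec (fun _ => 1) ⟨0, hn⟩ = A.trace := by
        rw [htr]; simp [Matrix.mulVec, dotProduct]
      rw [this]
    have e1 := hcon 0 (fun j => trivial)
    have e2 := hcon (fun _ => 1) (fun j => trivial)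
    rw [h1] at e1
    rw [h2] at e2
    have h4 : A.trace ^ 2 = 0 := by linear_combination (e2.trans e1.symm) / 2
    exact pow_eq_zero_iff (two_ne_zero) |>.mp h4
  · -- trace = 0 → universal
    intro Ω φ hΩ _ _ hφ _
    refine ⟨1, one_ne_zero, fun x hx => ?_⟩
    have hmem : A.mulVec x ⟨0, hn⟩ ∈ Ω := hx ⟨0, hn⟩
    have hdiff : DifferentiableAt ℂ φ (A.mulVec x ⟨0, hn⟩) :=
      (hφ _ hmem).differentiableWithinAt.differentiableAt
        (Filter.mem_of_superset (hΩ.mem_nhds hmem) (Set.subset_insert _ _))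
    rw [jac_eq hn A hrows _ _ hdiff, h0]
    ring
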